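/- Let D be a regular 4^m 2^{(n+1)-(p+1)} design with 2^k runs, represented by pairwise direct-summing two-dimensional subspaces U_1, …, U_m of V = (ZMod 2)^k and two-level vectors w_1, …, w_{n+1} ∈ V such that the U_t together with the w_i span V, with resolution at least III, and whose defining relation K contains at least one nonzero word (equivalently 2m + n + 1 > k). If, for some index i ∈ {1, …, n+1}, the delete-one-factor projection D_(i) has minimum aberration of type m among all the delete-one-factor projections D_(1), …, D_(n+1) of D, then w_i lies in the span of U_1, …, U_m together with the remaining vectors w_j (j ≠ i); consequently the U_t together with {w_j : j ≠ i} still span V, so that D_(i) has 2^k distinct runs. (Lemma A.1 of the paper.) -/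
import Mathlib


/-- The defining relation (including the zero word) of a regular `4^m 2^{n-p}` design
represented by subspaces `U t` (four-level factors) and vectors `w i` (two-level factors)
in `V = (ZMod 2)^k`: the set of pairs `(s, u)` with each `u t ∈ U t` and
`∑ i, s i • w i + ∑ t, u t = 0`. -/
def wordSet {k m n : ℕ} (U : Fin m → Submodule (ZMod 2) (Fin k → ZMod 2))
    (w : Fin n → Fin k → ZMod 2) :
    Set ((Fin n → ZMod 2) × (Fin m → (Fin k → ZMod 2))) :=
  {su | (∀ t, su.2 t ∈ U t) ∧ (∑ i, su.1 i • w i) + (∑ t, su.2 t) = 0}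

/-- The length of a word `(s, u)`: the number of indices `i` with `s i = 1` plus the
number of four-level factors `t` with `u t ≠ 0`. -/
def wordLength {k m n : ℕ} (su : (Fin n → ZMod 2) × (Fin m → (Fin k → ZMod 2))) : ℕ :=
  (Finset.univ.filter fun i => su.1 i = 1).card +
    (Finset.univ.filter fun t => su.2 t ≠ 0).card

/-- The type of a word `(s, u)`: the number of four-level factors `t` with `u t ≠ 0`. -/
def wordType {k m n : ℕ} (su : (Fin n → ZMod 2) × (Fin m → (Fin k → ZMod 2))) : ℕ :=
  (Finset.univ.filter fun t => su.2 t ≠ 0).card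

/-- `Acount U w ℓ t` is the number `A_{ℓ,t}` of defining words of length `ℓ` and type `t`. -/
noncomputable def Acount {k m n : ℕ} (U : Fin m → Submodule (ZMod 2) (Fin k → ZMod 2))
    (w : Fin n → Fin k → ZMod 2) (ℓ t : ℕ) : ℕ :=
  Nat.card {su : (Fin n → ZMod 2) × (Fin m → (Fin k → ZMod 2)) //
    su ∈ wordSet U w ∧ su ≠ 0 ∧ wordLength su = ℓ ∧ wordType su = t}

/-- `wlpLexLt A B` says that the word length pattern of type `m` recorded by `A`
(as a function `(length, type) ↦ A_{ℓ,t}`) is lexicographically strictly smaller than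
the one recorded by `B`, where positions are ordered by increasing length and,
within a length, by decreasing type: "less aberration of type m". -/
def wlpLexLt (A B : ℕ → ℕ → ℕ) : Prop :=
  ∃ ℓ t, A ℓ t < B ℓ t ∧
    ∀ ℓ' t', (ℓ' < ℓ ∨ (ℓ' = ℓ ∧ t < t')) → A ℓ' t' = B ℓ' t'

section Aux
variable {k m n : ℕ}

lemma myWordType_le (su : (Fin n → ZMod 2) × (Fin m → (Fin k → ZMod 2))) :
    (Finset.univ.filter fun t => su.2 t ≠ 0).card ≤ m := by
  simpa using (Finset.card_filter_le Finset.univ fun t => su.2 t ≠ 0)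

/-- A bijection between words of the projection and full words vanishing at `p`. -/
lemma myAcount_proj (U : Fin m → Submodule (ZMod 2) (Fin k → ZMod 2))
    (w : Fin (n + 1) → Fin k → ZMod 2) (p : Fin (n + 1)) (ℓ t : ℕ) :
    Acount U (w ∘ p.succAbove) ℓ t =
      Nat.card {su : (Fin (n + 1) → ZMod 2) × (Fin m → (Fin k → ZMod 2)) //
        su ∈ wordSet U w ∧ su ≠ 0 ∧ su.1 p = 0 ∧ wordLength su = ℓ ∧ wordType su = t} := by
  classical
  apply Nat.card_congr
  have hzero : ∀ s' : Fin n → ZMod 2, (p.insertNth (0 : ZMod 2) s' : Fin (n + 1) → ZMod 2) = 0 ↔ s' = 0 := by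
    intro s'
    constructor
    · intro h
      funext a
      have := congrFun h (p.succAbove a)
      simpa using this
    · rintro rfl
      funext b
      rcases eq_or_ne b p with rfl | hb
      · simp
      · obtain ⟨a, rfl⟩ : ∃ a, p.succAbove a = b := by
          have : b ∈ Set.range p.succAbove := by
            rw [Fin.range_succAbove]; simpa using hb
          exact this
        simp
  have hsum : ∀ (s' : Fin n → ZMod 2),
      (∑ b, (p.insertNth (0 : ZMod 2) s' : Fin (n + 1) → ZMod 2) b • w b) = ∑ a, s' a • (w ∘ p.succAbove) a := by
    intro s'
    rw [Fin.sum_univ_succAbove (fun b => (p.insertNth (0 : ZMod 2) s' : Fin (n + 1) → ZMod 2) b • w b) p]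
    simp
  have hcard : ∀ (s' : Fin n → ZMod 2),
      (Finset.univ.filter fun b => (p.insertNth (0 : ZMod 2) s' : Fin (n + 1) → ZMod 2) b = 1).card =
        (Finset.univ.filter fun a => s' a = 1).card := by
    intro s'
    rw [Finset.card_filter, Finset.card_filter,
      Fin.sum_univ_succAbove (fun b => if (p.insertNth (0 : ZMod 2) s' : Fin (n + 1) → ZMod 2) b = 1 then 1 else 0) p]
    simp
  refine
    { toFun := fun x => ⟨(p.insertNth 0 x.1.1, x.1.2), ?_⟩
      invFun := fun y => ⟨(y.1.1 ∘ p.succAbove, y.1.2), ?_⟩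
      left_inv := ?_
      right_inv := ?_ }
  · obtain ⟨⟨s', u⟩, ⟨hU, hrel⟩, hne, hlen, htyp⟩ := x
    refine ⟨⟨hU, ?_⟩, ?_, by simp, ?_, htyp⟩
    · simpa [hsum] using hrel
    · simp only [ne_eq, Prod.ext_iff, not_and_or] at hne ⊢
      rcases hne with h | h
      · exact Or.inl (by simpa [hzero] using h)
      · exact Or.inr h
    · simpa [wordLength, hcard] using hlen
  · obtain ⟨⟨s, u⟩, ⟨hU, hrel⟩, hne, hp, hlen, htyp⟩ := y
    have hins : p.insertNth (0 : ZMod 2) (s ∘ p.succAbove) = s := by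
      symm
      rw [Fin.eq_insertNth_iff]
      exact ⟨hp, rfl⟩
    refine ⟨⟨hU, ?_⟩, ?_, ?_, htyp⟩
    · have := hsum (s ∘ p.succAbove)
      rw [hins] at this
      rw [← this]
      exact hrel
    · simp only [ne_eq, Prod.ext_iff, not_and_or] at hne ⊢
      rcases hne with h | h
      · refine Or.inl fun h0 => h ?_
        rw [← hins, h0]
        exact (hzero 0).mpr rfl
      · exact Or.inr h
    · have h2 := hcard (s ∘ p.succAbove)
      rw [hins] at h2
      simp only [Function.comp_apply] at h2
      simp only [wordLength, Function.comp_apply] at hlen ⊢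
      omega
  · rintro ⟨⟨s', u⟩, hx⟩
    ext : 2 <;> simp
  · rintro ⟨⟨s, u⟩, hU, hne, hp, hrest⟩
    have hins : p.insertNth (0 : ZMod 2) (s ∘ p.succAbove) = s := by
      symm; rw [Fin.eq_insertNth_iff]; exact ⟨hp, rfl⟩
    apply Subtype.ext
    simp [hins]

lemma myLex_of_le (A B : ℕ → ℕ → ℕ) (m : ℕ) (hle : ∀ ℓ t, A ℓ t ≤ B ℓ t)
    (hhigh : ∀ ℓ t, m < t → A ℓ t = B ℓ t)
    (ℓ₀ t₀ : ℕ) (ht₀ : t₀ ≤ m) (hlt : A ℓ₀ t₀ < B ℓ₀ t₀) : wlpLexLt A B := by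
  classical
  have hex : ∃ ℓ, ∃ t, t ≤ m ∧ A ℓ t ≠ B ℓ t := ⟨ℓ₀, t₀, ht₀, hlt.ne⟩
  obtain ⟨t₁, ht₁m, ht₁⟩ := Nat.find_spec hex
  refine ⟨Nat.find hex, Nat.findGreatest (fun t => A (Nat.find hex) t ≠ B (Nat.find hex) t) m,
    lt_of_le_of_ne (hle _ _) (Nat.findGreatest_spec (P := fun t => A (Nat.find hex) t ≠ B (Nat.find hex) t) ht₁m ht₁), ?_⟩
  rintro ℓ' t' (h | ⟨rfl, h⟩)
  · by_cases htm : t' ≤ m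
    · by_contra hne
      exact Nat.find_min hex h ⟨t', htm, hne⟩
    · exact hhigh _ _ (lt_of_not_ge htm)
  · by_cases htm : t' ≤ m
    · by_contra hne
      exact Nat.findGreatest_is_greatest h htm hne
    · exact hhigh _ _ (lt_of_not_ge htm)

end Aux

lemma myCard_eq {α : Type*} (P : α → Prop) :
    Nat.card {x // P x} = Set.ncard {x | P x} := Nat.card_coe_set_eq {x | P x}

/-- **Lemma A.1.** If the delete-one-factor projection `D_(i)` has minimum aberration of
type `m` among all delete-one-factor projections of a resolution-≥III design `D` whose
defining relation contains a nonzero word, then `w i` lies in the span of the `U t` and the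
remaining `w j`, and the remaining factors still span `V`, so `D_(i)` has `2^k` distinct runs. -/
theorem deleteOneFactor_minAberration_spans {k m n : ℕ}
    (U : Fin m → Submodule (ZMod 2) (Fin k → ZMod 2))
    (hU2 : ∀ t, Module.finrank (ZMod 2) (U t) = 2)
    (hUind : iSupIndep U)
    (w : Fin (n + 1) → Fin k → ZMod 2)
    (hspan : (⨆ t, U t) ⊔ Submodule.span (ZMod 2) (Set.range w) = ⊤)
    (hres : ∀ su ∈ wordSet U w, su ≠ 0 → 3 ≤ wordLength su)
    (hword : ∃ su ∈ wordSet U w, su ≠ 0)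
    (i : Fin (n + 1))
    (hMA : ∀ j : Fin (n + 1),
      ¬ wlpLexLt (Acount U (w ∘ j.succAbove)) (Acount U (w ∘ i.succAbove))) :
    w i ∈ (⨆ t, U t) ⊔ Submodule.span (ZMod 2) (w '' {j | j ≠ i}) ∧
      (⨆ t, U t) ⊔ Submodule.span (ZMod 2) (Set.range (w ∘ i.succAbove)) = ⊤ := by
  classical
  have himg : w '' {j | j ≠ i} = Set.range (w ∘ i.succAbove) := by
    rw [Set.range_comp, Fin.range_succAbove]
    rfl
  suffices hmem : w i ∈ (⨆ t, U t) ⊔ Submodule.span (ZMod 2) (w '' {j | j ≠ i}) by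
    refine ⟨hmem, ?_⟩
    rw [← himg, eq_top_iff, ← hspan]
    apply sup_le le_sup_left
    rw [Submodule.span_le]
    rintro _ ⟨j, rfl⟩
    rcases eq_or_ne j i with rfl | hj
    · exact hmem
    · exact SetLike.mem_coe.mpr
        (Submodule.mem_sup_right (Submodule.subset_span ⟨j, hj, rfl⟩))
  by_contra hni
  set S := (⨆ t, U t) ⊔ Submodule.span (ZMod 2) (w '' {j | j ≠ i}) with hS
  have hzmod : ∀ a : ZMod 2, a ≠ 0 → a = 1 := by decide
  -- Step 1: every defining word vanishes at coordinate `i`.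
  have hsi : ∀ su ∈ wordSet U w, su.1 i = 0 := by
    rintro ⟨s, u⟩ ⟨hU, hrel⟩
    by_contra h
    have h1 : s i = 1 := hzmod _ h
    refine hni ?_
    rw [Fin.sum_univ_succAbove (fun b => s b • w b) i] at hrel
    simp only [h1, one_smul] at hrel
    rw [add_assoc] at hrel
    have hwi := eq_neg_of_add_eq_zero_left hrel
    rw [hwi]
    apply Submodule.neg_mem
    apply Submodule.add_mem
    · apply Submodule.sum_mem
      intro a _
      exact Submodule.mem_sup_right
        (Submodule.smul_mem _ _
          (Submodule.subset_span ⟨i.succAbove a, Fin.succAbove_ne i a, rfl⟩))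
    · apply Submodule.sum_mem
      intro t _
      exact Submodule.mem_sup_left (Submodule.mem_iSup_of_mem t (hU t))
  -- Step 2: a nonzero word has a nonzero two-level part.
  obtain ⟨⟨s, u⟩, hsu, hne⟩ := hword
  have hsnz : s ≠ 0 := by
    rintro rfl
    have hrel := hsu.2
    simp only [Pi.zero_apply, zero_smul, Finset.sum_const_zero, zero_add] at hrel
    have hu0 : ∀ t, u t = 0 := by
      intro t
      have hmem1 : u t ∈ U t := hsu.1 t
      have hsum : u t + ∑ x ∈ Finset.univ.erase t, u x = 0 := by
        rw [Finset.add_sum_erase Finset.univ u (Finset.mem_univ t)]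
        exact hrel
      have hmem2 : u t ∈ ⨆ j, ⨆ _ : j ≠ t, U j := by
        rw [eq_neg_of_add_eq_zero_left hsum]
        apply Submodule.neg_mem
        apply Submodule.sum_mem
        intro x hx
        exact Submodule.mem_iSup_of_mem x
          (Submodule.mem_iSup_of_mem (Finset.ne_of_mem_erase hx) (hsu.1 x))
      exact (Submodule.disjoint_def.mp (hUind t)) _ hmem1 hmem2
    exact hne (by rw [show u = 0 from funext hu0]; rfl)
  obtain ⟨j, hj⟩ := Function.ne_iff.mp hsnz
  have hsi0 : s i = 0 := hsi (s, u) hsu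
  have hji : j ≠ i := fun h => hj (h ▸ hsi0)
  -- Step 3: the projection on `j` would beat the projection on `i`.
  refine hMA j (myLex_of_le _ _ m ?_ ?_ (wordLength (s, u)) (wordType (s, u))
    (myWordType_le _) ?_)
  · -- componentwise ≤
    intro ℓ t
    rw [myAcount_proj, myAcount_proj, myCard_eq, myCard_eq]
    apply Set.ncard_le_ncard _ (Set.toFinite _)
    rintro su ⟨h1, h2, _, h4, h5⟩
    exact ⟨h1, h2, hsi su h1, h4, h5⟩
  · -- types beyond m
    intro ℓ t ht
    have hz : ∀ (w' : Fin n → Fin k → ZMod 2), Acount U w' ℓ t = 0 := by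
      intro w'
      rw [Acount, Nat.card_eq_zero]
      left
      refine ⟨?_⟩
      rintro ⟨su, _, _, _, htyp⟩
      have := myWordType_le su
      rw [wordType] at htyp
      omega
    rw [hz, hz]
  · -- strict inequality at the word's (length, type)
    rw [myAcount_proj, myAcount_proj, myCard_eq, myCard_eq]
    apply Set.ncard_lt_ncard _ (Set.toFinite _)
    rw [Set.ssubset_def]
    constructor
    · rintro su ⟨h1, h2, _, h4, h5⟩
      exact ⟨h1, h2, hsi su h1, h4, h5⟩
    · intro hsup
      exact hj (hsup ⟨hsu, hne, hsi0, rfl, rfl⟩).2.2.1
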